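/- With D = (1/2)·diag(-j,1,-j,-1)·(H₂ ⊗ H₂), the five matrices D, D², D³, D⁴, D⁵ = I₄ are pairwise mutually unbiased bases of C⁴: for any 1 ≤ p < q ≤ 5, every entry of (D^p)* D^q has absolute value 1/2. -/

import Mathlib

open Matrix Kronecker

def sylvesterH2 : Matrix (Fin 2) (Fin 2) ℂ := !![1, 1; 1, -1]

noncomputable def kerdockDiag4 : (Fin 2 × Fin 2) → ℂ :=
  fun p => !![-Complex.I, 1; -Complex.I, -1] p.1 p.2

noncomputable def kerdockD4 : Matrix (Fin 2 × Fin 2) (Fin 2 × Fin 2) ℂ :=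
  (1 / 2 : ℂ) • (Matrix.diagonal kerdockDiag4 * (sylvesterH2 ⊗ₖ sylvesterH2))

set_option maxHeartbeats 1000000

noncomputable def m1 : Matrix (Fin 2 × Fin 2) (Fin 2 × Fin 2) ℂ :=
  fun i j => (1/2 : ℂ) * (!![!![-Complex.I, -Complex.I; 1, -1], !![-Complex.I, -Complex.I; 1, -1];
    !![-Complex.I, -Complex.I; -1, 1], !![Complex.I, Complex.I; 1, -1]] i.1 j.1 i.2 j.2)
noncomputable def m2 : Matrix (Fin 2 × Fin 2) (Fin 2 × Fin 2) ℂ :=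
  fun i j => (1/2 : ℂ) * (!![!![-1, -1; -Complex.I, -Complex.I], !![-Complex.I, Complex.I; -1, 1];
    !![-Complex.I, Complex.I; 1, -1], !![-1, -1; Complex.I, Complex.I]] i.1 j.1 i.2 j.2)
noncomputable def m3 : Matrix (Fin 2 × Fin 2) (Fin 2 × Fin 2) ℂ :=
  fun i j => (1/2 : ℂ) * (!![!![-1, Complex.I; -1, Complex.I], !![Complex.I, 1; -Complex.I, -1];
    !![Complex.I, -1; -Complex.I, 1], !![-1, -Complex.I; -1, -Complex.I]] i.1 j.1 i.2 j.2)
noncomputable def m4 : Matrix (Fin 2 × Fin 2) (Fin 2 × Fin 2) ℂ :=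
  fun i j => (1/2 : ℂ) * (!![!![Complex.I, 1; Complex.I, -1], !![Complex.I, -1; Complex.I, 1];
    !![Complex.I, 1; Complex.I, -1], !![-Complex.I, 1; -Complex.I, -1]] i.1 j.1 i.2 j.2)

lemma D_apply (i j : Fin 2 × Fin 2) :
    kerdockD4 i j = (1/2 : ℂ) * (kerdockDiag4 i * (sylvesterH2 i.1 j.1 * sylvesterH2 i.2 j.2)) := by
  simp [kerdockD4, Matrix.smul_apply, Matrix.diagonal_mul, Matrix.kroneckerMap_apply]

lemma e1 : kerdockD4 = m1 := by
  ext ⟨a,b⟩ ⟨c,d⟩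
  fin_cases a <;> fin_cases b <;> fin_cases c <;> fin_cases d <;>
    simp [D_apply, m1, kerdockDiag4, sylvesterH2] <;> ring


lemma e2 : kerdockD4 ^ 2 = m2 := by
  rw [pow_two, e1]
  ext ⟨a,b⟩ ⟨c,d⟩
  fin_cases a <;> fin_cases b <;> fin_cases c <;> fin_cases d <;>
    simp [m1, m2, Matrix.mul_apply, Fintype.sum_prod_type, Fin.sum_univ_two, Complex.ext_iff]
  all_goals norm_num

lemma e3 : kerdockD4 ^ 3 = m3 := by
  rw [pow_succ, e2, e1]
  ext ⟨a,b⟩ ⟨c,d⟩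
  fin_cases a <;> fin_cases b <;> fin_cases c <;> fin_cases d <;>
    simp [m1, m2, m3, Matrix.mul_apply, Fintype.sum_prod_type, Fin.sum_univ_two, Complex.ext_iff]
  all_goals norm_num

lemma e4 : kerdockD4 ^ 4 = m4 := by
  rw [pow_succ, e3, e1]
  ext ⟨a,b⟩ ⟨c,d⟩
  fin_cases a <;> fin_cases b <;> fin_cases c <;> fin_cases d <;>
    simp [m1, m3, m4, Matrix.mul_apply, Fintype.sum_prod_type, Fin.sum_univ_two, Complex.ext_iff]
  all_goals norm_num

lemma e5 : kerdockD4 ^ 5 = 1 := by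
  rw [pow_succ, e4, e1]
  ext ⟨a,b⟩ ⟨c,d⟩
  fin_cases a <;> fin_cases b <;> fin_cases c <;> fin_cases d <;>
    simp [m1, m4, Matrix.mul_apply, Fintype.sum_prod_type, Fin.sum_univ_two,
      Matrix.one_apply, Prod.ext_iff, Complex.ext_iff]
  all_goals norm_num

lemma hct : kerdockD4ᴴ = kerdockD4 ^ 4 := by
  rw [e4, e1]
  ext ⟨a,b⟩ ⟨c,d⟩
  fin_cases a <;> fin_cases b <;> fin_cases c <;> fin_cases d <;>
    simp [m1, m4, Matrix.conjTranspose_apply, Complex.ext_iff]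
  all_goals norm_num

lemma habs : ∀ r : ℕ, 1 ≤ r → r ≤ 4 → ∀ i j : Fin 2 × Fin 2,
    ‖(kerdockD4 ^ r) i j‖ = 1 / 2 := by
  intro r h1 h4 i j
  interval_cases r
  · rw [pow_one, e1]
    fin_cases i <;> fin_cases j <;>
      simp [m1, _root_.map_mul, map_div₀, norm_mul, norm_div, Complex.norm_I] <;> norm_num
  · rw [e2]
    fin_cases i <;> fin_cases j <;>
      simp [m2, _root_.map_mul, map_div₀, norm_mul, norm_div, Complex.norm_I] <;> norm_num
  · rw [e3]
    fin_cases i <;> fin_cases j <;>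
      simp [m3, _root_.map_mul, map_div₀, norm_mul, norm_div, Complex.norm_I] <;> norm_num
  · rw [e4]
    fin_cases i <;> fin_cases j <;>
      simp [m4, _root_.map_mul, map_div₀, norm_mul, norm_div, Complex.norm_I] <;> norm_num

lemma hmod (n : ℕ) : kerdockD4 ^ n = kerdockD4 ^ (n % 5) := by
  conv_lhs => rw [← Nat.div_add_mod n 5]
  rw [pow_add, pow_mul, e5, one_pow, one_mul]


/-- The five powers D, D², D³, D⁴, D⁵ = I₄ are pairwise mutually unbiased:
for 1 ≤ p < q ≤ 5, every entry of (D^p)* D^q has absolute value 1/2. -/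
theorem kerdock_four_antenna_mub :
    ∀ p q : ℕ, 1 ≤ p → p < q → q ≤ 5 → ∀ i j : Fin 2 × Fin 2,
      ‖((kerdockD4 ^ p)ᴴ * kerdockD4 ^ q) i j‖ = 1 / 2 := by
  intro p q hp hpq hq i j
  rw [Matrix.conjTranspose_pow, hct, ← pow_mul, ← pow_add, hmod,
    show (4 * p + q) % 5 = q - p by omega]
  exact habs _ (by omega) (by omega) i j
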